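/- Let U₁, U₂ ∈ St(r,p₁), let B₁, B₂ be r×r real symmetric positive definite matrices, and let V₁, V₂ ∈ St(r,p₂). Then U₁B₁V₁ᵀ = U₂B₂V₂ᵀ if and only if there exists an orthogonal matrix O ∈ 𝕆_r with U₂ = U₁O, B₂ = OᵀB₁O and V₂ = V₁O. -/

import Mathlib

open Matrix

/-- Polar factorization of fixed-rank matrices: `U₁B₁V₁ᵀ = U₂B₂V₂ᵀ` iff `U₂ = U₁O`,
`B₂ = OᵀB₁O` and `V₂ = V₁O` for some orthogonal `O`. -/
theorem stmt6 {p₁ p₂ r : ℕ}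
    (U₁ U₂ : Matrix (Fin p₁) (Fin r) ℝ) (hU₁ : U₁ᵀ * U₁ = 1) (hU₂ : U₂ᵀ * U₂ = 1)
    (B₁ B₂ : Matrix (Fin r) (Fin r) ℝ) (hB₁ : B₁.PosDef) (hB₂ : B₂.PosDef)
    (V₁ V₂ : Matrix (Fin p₂) (Fin r) ℝ) (hV₁ : V₁ᵀ * V₁ = 1) (hV₂ : V₂ᵀ * V₂ = 1) :
    U₁ * B₁ * V₁ᵀ = U₂ * B₂ * V₂ᵀ ↔
      ∃ O : Matrix (Fin r) (Fin r) ℝ,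
        Oᵀ * O = 1 ∧ U₂ = U₁ * O ∧ B₂ = Oᵀ * B₁ * O ∧ V₂ = V₁ * O := by
  have hB₁s : B₁ᵀ = B₁ := by
    have := hB₁.isHermitian
    rwa [Matrix.IsHermitian, conjTranspose_eq_transpose_of_trivial] at this
  have hB₂s : B₂ᵀ = B₂ := by
    have := hB₂.isHermitian
    rwa [Matrix.IsHermitian, conjTranspose_eq_transpose_of_trivial] at this
  have hdet₁ : IsUnit B₁.det := isUnit_iff_ne_zero.mpr hB₁.det_pos.ne'
  have hdet₂ : IsUnit B₂.det := isUnit_iff_ne_zero.mpr hB₂.det_pos.ne'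
  have hB₁inv : B₁⁻¹ * B₁ = 1 := nonsing_inv_mul _ hdet₁
  have hB₂inv : B₂ * B₂⁻¹ = 1 := mul_nonsing_inv _ hdet₂
  constructor
  · intro h
    set O : Matrix (Fin r) (Fin r) ℝ := B₁ * (V₁ᵀ * (V₂ * B₂⁻¹)) with hOdef
    set O' : Matrix (Fin r) (Fin r) ℝ := B₁ * (U₁ᵀ * (U₂ * B₂⁻¹)) with hO'def
    have hT : V₁ * B₁ * U₁ᵀ = V₂ * B₂ * U₂ᵀ := by
      have := congrArg Matrix.transpose h
      simpa [Matrix.transpose_mul, hB₁s, hB₂s, Matrix.mul_assoc] using this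
    have hU : U₁ * O = U₂ := by
      calc U₁ * O = U₁ * B₁ * V₁ᵀ * (V₂ * B₂⁻¹) := by
            simp [hOdef, Matrix.mul_assoc]
        _ = U₂ * B₂ * V₂ᵀ * (V₂ * B₂⁻¹) := by rw [h]
        _ = U₂ * (B₂ * ((V₂ᵀ * V₂) * B₂⁻¹)) := by simp [Matrix.mul_assoc]
        _ = U₂ := by rw [hV₂, one_mul, hB₂inv, Matrix.mul_one]
    have hV : V₁ * O' = V₂ := by
      calc V₁ * O' = V₁ * B₁ * U₁ᵀ * (U₂ * B₂⁻¹) := by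
            simp [hO'def, Matrix.mul_assoc]
        _ = V₂ * B₂ * U₂ᵀ * (U₂ * B₂⁻¹) := by rw [hT]
        _ = V₂ * (B₂ * ((U₂ᵀ * U₂) * B₂⁻¹)) := by simp [Matrix.mul_assoc]
        _ = V₂ := by rw [hU₂, one_mul, hB₂inv, Matrix.mul_one]
    have hOO : Oᵀ * O = 1 := by
      have : (U₁ * O)ᵀ * (U₁ * O) = 1 := by rw [hU]; exact hU₂
      rwa [Matrix.transpose_mul, Matrix.mul_assoc, ← Matrix.mul_assoc U₁ᵀ, hU₁,
        one_mul] at this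
    have hO'O' : O'ᵀ * O' = 1 := by
      have : (V₁ * O')ᵀ * (V₁ * O') = 1 := by rw [hV]; exact hV₂
      rwa [Matrix.transpose_mul, Matrix.mul_assoc, ← Matrix.mul_assoc V₁ᵀ, hV₁,
        one_mul] at this
    have hOOt : O * Oᵀ = 1 := mul_eq_one_comm.mp hOO
    have hO'O't : O' * O'ᵀ = 1 := mul_eq_one_comm.mp hO'O'
    -- identifications
    have hOeq : O = U₁ᵀ * U₂ := by
      rw [← hU, ← Matrix.mul_assoc, hU₁, one_mul]
    have hO'eq : O' = V₁ᵀ * V₂ := by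
      rw [← hV, ← Matrix.mul_assoc, hV₁, one_mul]
    have hBmix : Oᵀ * B₁ * O' = B₂ := by
      rw [hOeq, hO'eq]
      calc (U₁ᵀ * U₂)ᵀ * B₁ * (V₁ᵀ * V₂)
          = U₂ᵀ * (U₁ * B₁ * V₁ᵀ * V₂) := by
            simp [Matrix.transpose_mul, Matrix.mul_assoc]
        _ = U₂ᵀ * (U₂ * B₂ * V₂ᵀ * V₂) := by rw [h]
        _ = (U₂ᵀ * U₂) * B₂ * (V₂ᵀ * V₂) := by simp [Matrix.mul_assoc]
        _ = B₂ := by rw [hU₂, hV₂, one_mul, Matrix.mul_one]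
    set C : Matrix (Fin r) (Fin r) ℝ := Oᵀ * B₁ * O with hCdef
    have hCpsd : C.PosSemidef := by
      have := hB₁.posSemidef.conjTranspose_mul_mul_same O
      rwa [conjTranspose_eq_transpose_of_trivial] at this
    have hCs : Cᵀ = C := by
      simp [hCdef, Matrix.transpose_mul, hB₁s, Matrix.mul_assoc]
    set W : Matrix (Fin r) (Fin r) ℝ := Oᵀ * O' with hWdef
    have hB₂CW : B₂ = C * W := by
      rw [hCdef, hWdef, ← hBmix]
      calc Oᵀ * B₁ * O' = Oᵀ * B₁ * ((O * Oᵀ) * O') := by rw [hOOt, one_mul]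
        _ = Oᵀ * B₁ * O * (Oᵀ * O') := by simp [Matrix.mul_assoc]
    have hWW : W * Wᵀ = 1 := by
      apply mul_eq_one_comm.mp
      rw [hWdef, Matrix.transpose_mul, Matrix.transpose_transpose,
        Matrix.mul_assoc, ← Matrix.mul_assoc O, hOOt, one_mul, hO'O']
    have hsq : C ^ 2 = B₂ ^ 2 := by
      have : B₂ * B₂ᵀ = C * C := by
        rw [hB₂CW, Matrix.transpose_mul, ← Matrix.mul_assoc, Matrix.mul_assoc C W,
          hWW, mul_one, hCs]
      rw [pow_two, pow_two, ← this, hB₂s]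
    have hCB₂ : C = B₂ := by
      open scoped MatrixOrder in
      exact (CFC.sq_eq_sq_iff C B₂ hCpsd.nonneg hB₂.posSemidef.nonneg).mp hsq
    have hOO' : O = O' := by
      have h1 : Oᵀ * B₁ * O = Oᵀ * B₁ * O' := by rw [← hCdef, hCB₂, hBmix]
      have h2 : B₁ * O = B₁ * O' := by
        have := congrArg (fun M => O * M) h1
        simpa [← Matrix.mul_assoc, hOOt, one_mul] using this
      have := congrArg (fun M => B₁⁻¹ * M) h2
      simpa [← Matrix.mul_assoc, hB₁inv, one_mul] using this
    exact ⟨O, hOO, hU.symm, by rw [← hCB₂, hCdef], by rw [hOO', ← hV]⟩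
  · rintro ⟨O, hO, rfl, rfl, rfl⟩
    have hOOt : O * Oᵀ = 1 := mul_eq_one_comm.mp hO
    calc U₁ * B₁ * V₁ᵀ = U₁ * ((O * Oᵀ) * B₁ * (O * Oᵀ)) * V₁ᵀ := by
          rw [hOOt, one_mul, mul_one]
      _ = U₁ * O * (Oᵀ * B₁ * O) * (V₁ * O)ᵀ := by
          simp [Matrix.transpose_mul, Matrix.mul_assoc]
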